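/- arXiv:math/0305304 — 3 statements merged into one kernel-verified Lean document; each statement's English description precedes it below -/
import Mathlib

section
/- The cubic Dirac operator D^p ∈ U(g) ⊗ Cl(p) is invariant under the adjoint action of r, i.e., D^p commutes with ξ(x) for every x ∈ r: ξ(x)·D^p = D^p·ξ(x) in U(g) ⊗ Cl(p). -/
open scoped TensorProduct
open LinearMap (BilinForm)

variable {g : Type*} [LieRing g] [LieAlgebra ℂ g] [FiniteDimensional ℂ g]

attribute [local instance] LieRing.ofAssociativeRing

set_option maxHeartbeats 1000000

/-- The cubic Dirac operator
`D^p = Σ_ℓ p_ℓ ⊗ q_ℓ - 1 ⊗ γ_p ∈ U(g) ⊗ Cl(p)` (with `γ_p` the cubic Cartan element,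
expressed in the dual bases via the symbol identification as
`(1/6) Σ_{l,m,n} B(q_l,[q_m,q_n]) p_l p_m p_n`) is invariant under the adjoint action
of `r`: it commutes with `ξ(x)` for every `x ∈ r`. -/
theorem cubic_dirac_operator_r_invariant
    (B : BilinForm ℂ g)
    (hsymm : ∀ x y : g, B x y = B y x)
    (hinv : ∀ x y z : g, B ⁅x, y⁆ z = B x ⁅y, z⁆)
    (hnondeg : B.Nondegenerate)
    (r : LieSubalgebra ℂ g)
    (hr : (B.restrict r.toSubmodule).Nondegenerate)
    (hstab : ∀ x ∈ r, ∀ y ∈ B.orthogonal r.toSubmodule,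
      ⁅x, y⁆ ∈ B.orthogonal r.toSubmodule)
    (α : r →ₗ⁅ℂ⁆
        CliffordAlgebra (B.restrict (B.orthogonal r.toSubmodule)).toQuadraticMap)
    (hα : ∀ (x : r) (y : B.orthogonal r.toSubmodule),
      ⁅α x, CliffordAlgebra.ι (B.restrict (B.orthogonal r.toSubmodule)).toQuadraticMap y⁆ =
        CliffordAlgebra.ι (B.restrict (B.orthogonal r.toSubmodule)).toQuadraticMap
          ⟨⁅(x : g), (y : g)⁆, hstab x x.2 y y.2⟩)
    (ξ : UniversalEnvelopingAlgebra ℂ r →ₐ[ℂ]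
        UniversalEnvelopingAlgebra ℂ g ⊗[ℂ]
          CliffordAlgebra (B.restrict (B.orthogonal r.toSubmodule)).toQuadraticMap)
    (hξ : ∀ x : r, ξ (UniversalEnvelopingAlgebra.ι ℂ x)
      = (UniversalEnvelopingAlgebra.ι ℂ (x : g)) ⊗ₜ[ℂ] 1 + 1 ⊗ₜ[ℂ] α x)
    {ι : Type*} [Fintype ι] [DecidableEq ι]
    (p : Module.Basis ι ℂ (B.orthogonal r.toSubmodule)) (q : ι → (B.orthogonal r.toSubmodule))
    (hpq : ∀ i j, B (p i : g) (q j : g) = if i = j then 1 else 0)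
    (γp : CliffordAlgebra (B.restrict (B.orthogonal r.toSubmodule)).toQuadraticMap)
    (hγ : γp = (6⁻¹ : ℂ) • ∑ l, ∑ m, ∑ n,
      B (q l : g) ⁅(q m : g), (q n : g)⁆ •
        (CliffordAlgebra.ι (B.restrict (B.orthogonal r.toSubmodule)).toQuadraticMap (p l) *
         CliffordAlgebra.ι (B.restrict (B.orthogonal r.toSubmodule)).toQuadraticMap (p m) *
         CliffordAlgebra.ι (B.restrict (B.orthogonal r.toSubmodule)).toQuadraticMap (p n)))
    (Dp : UniversalEnvelopingAlgebra ℂ g ⊗[ℂ]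
        CliffordAlgebra (B.restrict (B.orthogonal r.toSubmodule)).toQuadraticMap)
    (hD : Dp = (∑ l, (UniversalEnvelopingAlgebra.ι ℂ (p l : g)) ⊗ₜ[ℂ]
        CliffordAlgebra.ι (B.restrict (B.orthogonal r.toSubmodule)).toQuadraticMap (q l))
      - 1 ⊗ₜ[ℂ] γp) :
    ∀ x : r, ξ (UniversalEnvelopingAlgebra.ι ℂ x) * Dp
      = Dp * ξ (UniversalEnvelopingAlgebra.ι ℂ x) := by
  classical
  intro x
  have hrefl : B.IsRefl := fun a b h => by rw [hsymm]; exact h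
  have hB1 : ∀ u z : g, B ⁅(x : g), u⁆ z = - B u ⁅(x : g), z⁆ := by
    intro u z
    have h1 : B ⁅u, (x : g)⁆ z = B u ⁅(x : g), z⁆ := hinv u x z
    have h2 : (⁅u, (x : g)⁆ : g) = -⁅(x : g), u⁆ := by rw [← lie_skew]
    rw [h2, map_neg, LinearMap.neg_apply] at h1
    linear_combination -h1
  have hB3 : ∀ u v w : g, B ⁅(x : g), u⁆ ⁅v, w⁆ + B u ⁅⁅(x : g), v⁆, w⁆
      + B u ⁅v, ⁅(x : g), w⁆⁆ = 0 := by
    intro u v w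
    have hL : (⁅(x : g), ⁅v, w⁆⁆ : g) = ⁅⁅(x : g), v⁆, w⁆ + ⁅v, ⁅(x : g), w⁆⁆ :=
      leibniz_lie _ _ _
    have := hB1 u ⁅v, w⁆
    rw [this, hL, map_add]
    ring
  have hbr : ∀ v : (B.orthogonal r.toSubmodule), ⁅(x : g), (v : g)⁆ ∈ (B.orthogonal r.toSubmodule) := fun v => hstab x x.2 v v.2
  have exp1 : ∀ v : (B.orthogonal r.toSubmodule), (∑ m, B (v : g) (q m : g) • p m) = v := by
    intro v
    have hcoef : ∀ m, B (v : g) (q m : g) = p.repr v m := by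
      intro m
      conv_lhs => rw [← p.sum_repr v]
      rw [AddSubmonoidClass.coe_finset_sum]
      simp only [SetLike.val_smul, map_sum, map_smul, LinearMap.sum_apply,
        LinearMap.smul_apply, smul_eq_mul]
      rw [Finset.sum_congr rfl (fun i _ => by rw [hpq i m])]
      simp
    simp_rw [hcoef]
    exact p.sum_repr v
  have nondegP : ∀ v : (B.orthogonal r.toSubmodule), (∀ l, B (p l : g) (v : g) = 0) → v = 0 := by
    intro v hv
    have hcompl : IsCompl r.toSubmodule (B.orthogonal r.toSubmodule) :=
      LinearMap.BilinForm.isCompl_orthogonal_of_restrict_nondegenerate hrefl hr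
    have hvg : (v : g) = 0 := by
      apply hnondeg.1
      intro w
      have hw : w ∈ r.toSubmodule ⊔ (B.orthogonal r.toSubmodule) := by rw [hcompl.sup_eq_top]; trivial
      obtain ⟨y, hy, z, hz, rfl⟩ := Submodule.mem_sup.mp hw
      have h1 : B (v : g) y = 0 := by rw [hsymm]; exact v.2 y hy
      have h2 : B (v : g) z = 0 := by
        rw [hsymm]
        have hz' : (⟨z, hz⟩ : (B.orthogonal r.toSubmodule)) = ∑ i, p.repr ⟨z, hz⟩ i • p i := (p.sum_repr _).symm
        have : z = ∑ i, p.repr ⟨z, hz⟩ i • (p i : g) := by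
          conv_lhs => rw [show z = ((⟨z, hz⟩ : (B.orthogonal r.toSubmodule)) : g) from rfl, hz',
            AddSubmonoidClass.coe_finset_sum]
          simp
        rw [this]
        simp [map_sum, map_smul, hv]
      rw [map_add, h1, h2, add_zero]
    ext
    exact hvg
  have exp2 : ∀ v : (B.orthogonal r.toSubmodule), (∑ m, B (p m : g) (v : g) • q m) = v := by
    intro v
    have h0 : v - ∑ m, B (p m : g) (v : g) • q m = 0 := by
      apply nondegP
      intro l
      have hcoe : ((v - ∑ m, B (p m : g) (v : g) • q m : (B.orthogonal r.toSubmodule)) : g)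
          = (v : g) - ∑ m, B (p m : g) (v : g) • (q m : g) := by
        rw [AddSubgroupClass.coe_sub, AddSubmonoidClass.coe_finset_sum]
        simp
      rw [hcoe, map_sub, map_sum]
      simp only [map_smul, smul_eq_mul]
      rw [Finset.sum_congr rfl (fun i _ => by rw [hpq l i])]
      simp
    have := sub_eq_zero.mp h0
    exact this.symm
  have exp2g : ∀ v : (B.orthogonal r.toSubmodule), (∑ m, B (p m : g) (v : g) • (q m : g)) = (v : g) := by
    intro v
    conv_rhs => rw [← exp2 v, AddSubmonoidClass.coe_finset_sum]
    simp
  have exp1g : ∀ v : (B.orthogonal r.toSubmodule), (∑ m, B (v : g) (q m : g) • (p m : g)) = (v : g) := by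
    intro v
    conv_rhs => rw [← exp1 v, AddSubmonoidClass.coe_finset_sum]
    simp
  -- coercion helpers for brackets
  have hbrg2 : ∀ v : (B.orthogonal r.toSubmodule), (∑ m, B (p m : g) ⁅(x : g), (v : g)⁆ • (q m : g))
      = ⁅(x : g), (v : g)⁆ := by
    intro v
    simpa using exp2g ⟨⁅(x : g), (v : g)⁆, hbr v⟩
  have hbrg1 : ∀ v : (B.orthogonal r.toSubmodule), (∑ m, B ⁅(x : g), (v : g)⁆ (q m : g) • (p m : g))
      = ⁅(x : g), (v : g)⁆ := by
    intro v
    simpa using exp1g ⟨⁅(x : g), (v : g)⁆, hbr v⟩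
  have hbrP1 : ∀ v : (B.orthogonal r.toSubmodule), (∑ m, B ⁅(x : g), (v : g)⁆ (q m : g) • p m)
      = (⟨⁅(x : g), (v : g)⁆, hbr v⟩ : (B.orthogonal r.toSubmodule)) := by
    intro v
    have := exp1 ⟨⁅(x : g), (v : g)⁆, hbr v⟩
    simpa using this
  have hbrP2 : ∀ v : (B.orthogonal r.toSubmodule), (∑ m, B (p m : g) ⁅(x : g), (v : g)⁆ • q m)
      = (⟨⁅(x : g), (v : g)⁆, hbr v⟩ : (B.orthogonal r.toSubmodule)) := by
    intro v
    have := exp2 ⟨⁅(x : g), (v : g)⁆, hbr v⟩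
    simpa using this
  -- finite sums and lie brackets
  have sum_lie' : ∀ (f : ι → g) (z : g), ⁅∑ i, f i, z⁆ = ∑ i, ⁅f i, z⁆ := by
    intro f z
    induction (Finset.univ : Finset ι) using Finset.induction with
    | empty => simp
    | insert _ _ h ih => rw [Finset.sum_insert h, Finset.sum_insert h, add_lie, ih]
  have lie_sum' : ∀ (z : g) (f : ι → g), ⁅z, ∑ i, f i⁆ = ∑ i, ⁅z, f i⁆ := by
    intro z f
    induction (Finset.univ : Finset ι) using Finset.induction with
    | empty => simp
    | insert _ _ h ih => rw [Finset.sum_insert h, Finset.sum_insert h, lie_add, ih]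
  -- bracket identities in the enveloping and Clifford algebras
  have hU : ∀ a b : g, (UniversalEnvelopingAlgebra.ι ℂ) ⁅a, b⁆ = (UniversalEnvelopingAlgebra.ι ℂ) a * (UniversalEnvelopingAlgebra.ι ℂ) b - (UniversalEnvelopingAlgebra.ι ℂ) b * (UniversalEnvelopingAlgebra.ι ℂ) a := by
    intro a b
    rw [LieHom.map_lie, Ring.lie_def]
  have hC : ∀ v : (B.orthogonal r.toSubmodule), (CliffordAlgebra.ι ((B.restrict (B.orthogonal r.toSubmodule)).toQuadraticMap)) (⟨⁅(x : g), (v : g)⁆, hbr v⟩ : (B.orthogonal r.toSubmodule))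
      = α x * (CliffordAlgebra.ι ((B.restrict (B.orthogonal r.toSubmodule)).toQuadraticMap)) v - (CliffordAlgebra.ι ((B.restrict (B.orthogonal r.toSubmodule)).toQuadraticMap)) v * α x := by
    intro v
    exact (hα x v).symm.trans (Ring.lie_def _ _)
  -- the adjoint action of α x on the generators, in coordinates
  have hadc : ∀ i : ι, α x * (CliffordAlgebra.ι ((B.restrict (B.orthogonal r.toSubmodule)).toQuadraticMap)) (p i) - (CliffordAlgebra.ι ((B.restrict (B.orthogonal r.toSubmodule)).toQuadraticMap)) (p i) * α x
      = ∑ j, B ⁅(x : g), (p i : g)⁆ (q j : g) • (CliffordAlgebra.ι ((B.restrict (B.orthogonal r.toSubmodule)).toQuadraticMap)) (p j) := by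
    intro i
    rw [← hC (p i), ← hbrP1 (p i), map_sum]
    exact Finset.sum_congr rfl fun j _ => by rw [map_smul]
  -- Leibniz identity for the commutator with a triple product
  have leib : ∀ a b c : CliffordAlgebra ((B.restrict (B.orthogonal r.toSubmodule)).toQuadraticMap), α x * (a * b * c) - (a * b * c) * α x
      = (α x * a - a * α x) * b * c + a * (α x * b - b * α x) * c
        + a * b * (α x * c - c * α x) := by
    intro a b c
    noncomm_ring
  -- commutator with a basis monomial, in coordinates
  have step1 : ∀ l m n : ι,
      α x * ((CliffordAlgebra.ι ((B.restrict (B.orthogonal r.toSubmodule)).toQuadraticMap)) (p l) * (CliffordAlgebra.ι ((B.restrict (B.orthogonal r.toSubmodule)).toQuadraticMap)) (p m) * (CliffordAlgebra.ι ((B.restrict (B.orthogonal r.toSubmodule)).toQuadraticMap)) (p n))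
        - ((CliffordAlgebra.ι ((B.restrict (B.orthogonal r.toSubmodule)).toQuadraticMap)) (p l) * (CliffordAlgebra.ι ((B.restrict (B.orthogonal r.toSubmodule)).toQuadraticMap)) (p m) * (CliffordAlgebra.ι ((B.restrict (B.orthogonal r.toSubmodule)).toQuadraticMap)) (p n)) * α x
      = ∑ j, (B ⁅(x : g), (p l : g)⁆ (q j : g) • ((CliffordAlgebra.ι ((B.restrict (B.orthogonal r.toSubmodule)).toQuadraticMap)) (p j) * (CliffordAlgebra.ι ((B.restrict (B.orthogonal r.toSubmodule)).toQuadraticMap)) (p m) * (CliffordAlgebra.ι ((B.restrict (B.orthogonal r.toSubmodule)).toQuadraticMap)) (p n))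
          + B ⁅(x : g), (p m : g)⁆ (q j : g) • ((CliffordAlgebra.ι ((B.restrict (B.orthogonal r.toSubmodule)).toQuadraticMap)) (p l) * (CliffordAlgebra.ι ((B.restrict (B.orthogonal r.toSubmodule)).toQuadraticMap)) (p j) * (CliffordAlgebra.ι ((B.restrict (B.orthogonal r.toSubmodule)).toQuadraticMap)) (p n))
          + B ⁅(x : g), (p n : g)⁆ (q j : g) • ((CliffordAlgebra.ι ((B.restrict (B.orthogonal r.toSubmodule)).toQuadraticMap)) (p l) * (CliffordAlgebra.ι ((B.restrict (B.orthogonal r.toSubmodule)).toQuadraticMap)) (p m) * (CliffordAlgebra.ι ((B.restrict (B.orthogonal r.toSubmodule)).toQuadraticMap)) (p j))) := by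
    intro l m n
    rw [leib, hadc l, hadc m, hadc n]
    simp only [Finset.sum_mul, Finset.mul_sum, smul_mul_assoc, mul_smul_comm,
      ← Finset.sum_add_distrib]
  -- reordering lemmas for quadruple sums
  have sum4_swap14 : ∀ f : ι → ι → ι → ι → CliffordAlgebra ((B.restrict (B.orthogonal r.toSubmodule)).toQuadraticMap),
      (∑ a, ∑ b, ∑ c, ∑ d, f a b c d) = ∑ d, ∑ b, ∑ c, ∑ a, f a b c d := by
    intro f
    calc (∑ a, ∑ b, ∑ c, ∑ d, f a b c d)
        = ∑ a, ∑ b, ∑ d, ∑ c, f a b c d :=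
          Finset.sum_congr rfl fun _ _ => Finset.sum_congr rfl fun _ _ => Finset.sum_comm
      _ = ∑ a, ∑ d, ∑ b, ∑ c, f a b c d :=
          Finset.sum_congr rfl fun _ _ => Finset.sum_comm
      _ = ∑ d, ∑ a, ∑ b, ∑ c, f a b c d := Finset.sum_comm
      _ = ∑ d, ∑ b, ∑ a, ∑ c, f a b c d :=
          Finset.sum_congr rfl fun _ _ => Finset.sum_comm
      _ = ∑ d, ∑ b, ∑ c, ∑ a, f a b c d :=
          Finset.sum_congr rfl fun _ _ => Finset.sum_congr rfl fun _ _ => Finset.sum_comm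
  have sum4_swap24 : ∀ f : ι → ι → ι → ι → CliffordAlgebra ((B.restrict (B.orthogonal r.toSubmodule)).toQuadraticMap),
      (∑ a, ∑ b, ∑ c, ∑ d, f a b c d) = ∑ a, ∑ d, ∑ c, ∑ b, f a b c d := by
    intro f
    refine Finset.sum_congr rfl fun a _ => ?_
    calc (∑ b, ∑ c, ∑ d, f a b c d)
        = ∑ b, ∑ d, ∑ c, f a b c d :=
          Finset.sum_congr rfl fun _ _ => Finset.sum_comm
      _ = ∑ d, ∑ b, ∑ c, f a b c d := Finset.sum_comm
      _ = ∑ d, ∑ c, ∑ b, f a b c d :=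
          Finset.sum_congr rfl fun _ _ => Finset.sum_comm
  have sum4_swap34 : ∀ f : ι → ι → ι → ι → CliffordAlgebra ((B.restrict (B.orthogonal r.toSubmodule)).toQuadraticMap),
      (∑ a, ∑ b, ∑ c, ∑ d, f a b c d) = ∑ a, ∑ b, ∑ d, ∑ c, f a b c d := by
    intro f
    exact Finset.sum_congr rfl fun _ _ => Finset.sum_congr rfl fun _ _ => Finset.sum_comm
  -- scalar identity
  have claim : ∀ a b c : ι,
      (∑ l, (B (q l : g) ⁅(q b : g), (q c : g)⁆ * B ⁅(x : g), (p l : g)⁆ (q a : g)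
        + B (q a : g) ⁅(q l : g), (q c : g)⁆ * B ⁅(x : g), (p l : g)⁆ (q b : g)
        + B (q a : g) ⁅(q b : g), (q l : g)⁆ * B ⁅(x : g), (p l : g)⁆ (q c : g))) = 0 := by
    intro a b c
    have E1 : (∑ l, B (q l : g) ⁅(q b : g), (q c : g)⁆ * B ⁅(x : g), (p l : g)⁆ (q a : g))
        = -(B ⁅(x : g), (q a : g)⁆ ⁅(q b : g), (q c : g)⁆) := by
      conv_rhs => rw [← hbrg2 (q a)]
      rw [map_sum, LinearMap.sum_apply, ← Finset.sum_neg_distrib]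
      refine Finset.sum_congr rfl fun l _ => ?_
      rw [hB1, map_smul, LinearMap.smul_apply, smul_eq_mul]
      ring
    have E2 : (∑ l, B (q a : g) ⁅(q l : g), (q c : g)⁆ * B ⁅(x : g), (p l : g)⁆ (q b : g))
        = -(B (q a : g) ⁅⁅(x : g), (q b : g)⁆, (q c : g)⁆) := by
      conv_rhs => rw [← hbrg2 (q b)]
      rw [sum_lie', map_sum, ← Finset.sum_neg_distrib]
      refine Finset.sum_congr rfl fun l _ => ?_
      rw [hB1, smul_lie, map_smul, smul_eq_mul]
      ring
    have E3 : (∑ l, B (q a : g) ⁅(q b : g), (q l : g)⁆ * B ⁅(x : g), (p l : g)⁆ (q c : g))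
        = -(B (q a : g) ⁅(q b : g), ⁅(x : g), (q c : g)⁆⁆) := by
      conv_rhs => rw [← hbrg2 (q c)]
      rw [lie_sum', map_sum, ← Finset.sum_neg_distrib]
      refine Finset.sum_congr rfl fun l _ => ?_
      rw [hB1, lie_smul, map_smul, smul_eq_mul]
      ring
    rw [Finset.sum_add_distrib, Finset.sum_add_distrib, E1, E2, E3]
    linear_combination (-1 : ℂ) * hB3 (q a : g) (q b : g) (q c : g)
  -- invariance of the cubic element
  have hγ0 : (∑ l, ∑ m, ∑ n, B (q l : g) ⁅(q m : g), (q n : g)⁆ •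
      (α x * ((CliffordAlgebra.ι ((B.restrict (B.orthogonal r.toSubmodule)).toQuadraticMap)) (p l) * (CliffordAlgebra.ι ((B.restrict (B.orthogonal r.toSubmodule)).toQuadraticMap)) (p m) * (CliffordAlgebra.ι ((B.restrict (B.orthogonal r.toSubmodule)).toQuadraticMap)) (p n))
        - ((CliffordAlgebra.ι ((B.restrict (B.orthogonal r.toSubmodule)).toQuadraticMap)) (p l) * (CliffordAlgebra.ι ((B.restrict (B.orthogonal r.toSubmodule)).toQuadraticMap)) (p m) * (CliffordAlgebra.ι ((B.restrict (B.orthogonal r.toSubmodule)).toQuadraticMap)) (p n)) * α x)) = 0 := by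
    simp_rw [step1, Finset.smul_sum, smul_add, smul_smul, Finset.sum_add_distrib]
    have e1 : (∑ l, ∑ m, ∑ n, ∑ j,
          (B (q l : g) ⁅(q m : g), (q n : g)⁆ * B ⁅(x : g), (p l : g)⁆ (q j : g)) •
            ((CliffordAlgebra.ι ((B.restrict (B.orthogonal r.toSubmodule)).toQuadraticMap)) (p j) * (CliffordAlgebra.ι ((B.restrict (B.orthogonal r.toSubmodule)).toQuadraticMap)) (p m) * (CliffordAlgebra.ι ((B.restrict (B.orthogonal r.toSubmodule)).toQuadraticMap)) (p n)))
        = ∑ a, ∑ b, ∑ c, ∑ l,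
          (B (q l : g) ⁅(q b : g), (q c : g)⁆ * B ⁅(x : g), (p l : g)⁆ (q a : g)) •
            ((CliffordAlgebra.ι ((B.restrict (B.orthogonal r.toSubmodule)).toQuadraticMap)) (p a) * (CliffordAlgebra.ι ((B.restrict (B.orthogonal r.toSubmodule)).toQuadraticMap)) (p b) * (CliffordAlgebra.ι ((B.restrict (B.orthogonal r.toSubmodule)).toQuadraticMap)) (p c)) :=
      sum4_swap14 (fun l m n j =>
        (B (q l : g) ⁅(q m : g), (q n : g)⁆ * B ⁅(x : g), (p l : g)⁆ (q j : g)) •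
          ((CliffordAlgebra.ι ((B.restrict (B.orthogonal r.toSubmodule)).toQuadraticMap)) (p j) * (CliffordAlgebra.ι ((B.restrict (B.orthogonal r.toSubmodule)).toQuadraticMap)) (p m) * (CliffordAlgebra.ι ((B.restrict (B.orthogonal r.toSubmodule)).toQuadraticMap)) (p n)))
    have e2 : (∑ l, ∑ m, ∑ n, ∑ j,
          (B (q l : g) ⁅(q m : g), (q n : g)⁆ * B ⁅(x : g), (p m : g)⁆ (q j : g)) •
            ((CliffordAlgebra.ι ((B.restrict (B.orthogonal r.toSubmodule)).toQuadraticMap)) (p l) * (CliffordAlgebra.ι ((B.restrict (B.orthogonal r.toSubmodule)).toQuadraticMap)) (p j) * (CliffordAlgebra.ι ((B.restrict (B.orthogonal r.toSubmodule)).toQuadraticMap)) (p n)))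
        = ∑ a, ∑ b, ∑ c, ∑ l,
          (B (q a : g) ⁅(q l : g), (q c : g)⁆ * B ⁅(x : g), (p l : g)⁆ (q b : g)) •
            ((CliffordAlgebra.ι ((B.restrict (B.orthogonal r.toSubmodule)).toQuadraticMap)) (p a) * (CliffordAlgebra.ι ((B.restrict (B.orthogonal r.toSubmodule)).toQuadraticMap)) (p b) * (CliffordAlgebra.ι ((B.restrict (B.orthogonal r.toSubmodule)).toQuadraticMap)) (p c)) :=
      sum4_swap24 (fun l m n j =>
        (B (q l : g) ⁅(q m : g), (q n : g)⁆ * B ⁅(x : g), (p m : g)⁆ (q j : g)) •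
          ((CliffordAlgebra.ι ((B.restrict (B.orthogonal r.toSubmodule)).toQuadraticMap)) (p l) * (CliffordAlgebra.ι ((B.restrict (B.orthogonal r.toSubmodule)).toQuadraticMap)) (p j) * (CliffordAlgebra.ι ((B.restrict (B.orthogonal r.toSubmodule)).toQuadraticMap)) (p n)))
    have e3 : (∑ l, ∑ m, ∑ n, ∑ j,
          (B (q l : g) ⁅(q m : g), (q n : g)⁆ * B ⁅(x : g), (p n : g)⁆ (q j : g)) •
            ((CliffordAlgebra.ι ((B.restrict (B.orthogonal r.toSubmodule)).toQuadraticMap)) (p l) * (CliffordAlgebra.ι ((B.restrict (B.orthogonal r.toSubmodule)).toQuadraticMap)) (p m) * (CliffordAlgebra.ι ((B.restrict (B.orthogonal r.toSubmodule)).toQuadraticMap)) (p j)))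
        = ∑ a, ∑ b, ∑ c, ∑ l,
          (B (q a : g) ⁅(q b : g), (q l : g)⁆ * B ⁅(x : g), (p l : g)⁆ (q c : g)) •
            ((CliffordAlgebra.ι ((B.restrict (B.orthogonal r.toSubmodule)).toQuadraticMap)) (p a) * (CliffordAlgebra.ι ((B.restrict (B.orthogonal r.toSubmodule)).toQuadraticMap)) (p b) * (CliffordAlgebra.ι ((B.restrict (B.orthogonal r.toSubmodule)).toQuadraticMap)) (p c)) :=
      sum4_swap34 (fun l m n j =>
        (B (q l : g) ⁅(q m : g), (q n : g)⁆ * B ⁅(x : g), (p n : g)⁆ (q j : g)) •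
          ((CliffordAlgebra.ι ((B.restrict (B.orthogonal r.toSubmodule)).toQuadraticMap)) (p l) * (CliffordAlgebra.ι ((B.restrict (B.orthogonal r.toSubmodule)).toQuadraticMap)) (p m) * (CliffordAlgebra.ι ((B.restrict (B.orthogonal r.toSubmodule)).toQuadraticMap)) (p j)))
    rw [e1, e2, e3]
    simp_rw [← Finset.sum_add_distrib, ← add_smul, ← Finset.sum_smul]
    refine Finset.sum_eq_zero fun a _ => Finset.sum_eq_zero fun b _ =>
      Finset.sum_eq_zero fun c _ => ?_
    rw [claim a b c, zero_smul]
  have hcommγ : α x * γp = γp * α x := by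
    rw [← sub_eq_zero, hγ, mul_smul_comm, smul_mul_assoc, ← smul_sub]
    simp_rw [Finset.mul_sum, Finset.sum_mul, ← Finset.sum_sub_distrib,
      mul_smul_comm, smul_mul_assoc, ← smul_sub]
    rw [hγ0, smul_zero]
  -- the two commutator sums cancel
  have hXS : ((UniversalEnvelopingAlgebra.ι ℂ) (x : g) ⊗ₜ[ℂ] (1 : CliffordAlgebra ((B.restrict (B.orthogonal r.toSubmodule)).toQuadraticMap)))
        * (∑ l, (UniversalEnvelopingAlgebra.ι ℂ) (p l : g) ⊗ₜ[ℂ] (CliffordAlgebra.ι ((B.restrict (B.orthogonal r.toSubmodule)).toQuadraticMap)) (q l))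
      - (∑ l, (UniversalEnvelopingAlgebra.ι ℂ) (p l : g) ⊗ₜ[ℂ] (CliffordAlgebra.ι ((B.restrict (B.orthogonal r.toSubmodule)).toQuadraticMap)) (q l))
        * ((UniversalEnvelopingAlgebra.ι ℂ) (x : g) ⊗ₜ[ℂ] (1 : CliffordAlgebra ((B.restrict (B.orthogonal r.toSubmodule)).toQuadraticMap)))
      = ∑ l, (UniversalEnvelopingAlgebra.ι ℂ) ⁅(x : g), (p l : g)⁆ ⊗ₜ[ℂ] (CliffordAlgebra.ι ((B.restrict (B.orthogonal r.toSubmodule)).toQuadraticMap)) (q l) := by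
    rw [Finset.mul_sum, Finset.sum_mul, ← Finset.sum_sub_distrib]
    refine Finset.sum_congr rfl fun l _ => ?_
    rw [Algebra.TensorProduct.tmul_mul_tmul, Algebra.TensorProduct.tmul_mul_tmul,
      one_mul, mul_one, ← TensorProduct.sub_tmul, ← hU]
  have hAS : ((1 : UniversalEnvelopingAlgebra ℂ g) ⊗ₜ[ℂ] α x)
        * (∑ l, (UniversalEnvelopingAlgebra.ι ℂ) (p l : g) ⊗ₜ[ℂ] (CliffordAlgebra.ι ((B.restrict (B.orthogonal r.toSubmodule)).toQuadraticMap)) (q l))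
      - (∑ l, (UniversalEnvelopingAlgebra.ι ℂ) (p l : g) ⊗ₜ[ℂ] (CliffordAlgebra.ι ((B.restrict (B.orthogonal r.toSubmodule)).toQuadraticMap)) (q l))
        * ((1 : UniversalEnvelopingAlgebra ℂ g) ⊗ₜ[ℂ] α x)
      = ∑ l, (UniversalEnvelopingAlgebra.ι ℂ) (p l : g) ⊗ₜ[ℂ] (CliffordAlgebra.ι ((B.restrict (B.orthogonal r.toSubmodule)).toQuadraticMap)) (⟨⁅(x : g), (q l : g)⁆, hbr (q l)⟩ : (B.orthogonal r.toSubmodule)) := by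
    rw [Finset.mul_sum, Finset.sum_mul, ← Finset.sum_sub_distrib]
    refine Finset.sum_congr rfl fun l _ => ?_
    rw [Algebra.TensorProduct.tmul_mul_tmul, Algebra.TensorProduct.tmul_mul_tmul,
      one_mul, mul_one, ← TensorProduct.tmul_sub, ← hC]
  have hUsum : ∀ f : ι → g, (UniversalEnvelopingAlgebra.ι ℂ) (∑ i, f i) = ∑ i, (UniversalEnvelopingAlgebra.ι ℂ) (f i) := by
    intro f
    simpa using map_sum (UniversalEnvelopingAlgebra.ι ℂ).toLinearMap f Finset.univ
  have hUsmul : ∀ (c : ℂ) (v : g), (UniversalEnvelopingAlgebra.ι ℂ) (c • v) = c • (UniversalEnvelopingAlgebra.ι ℂ) v := by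
    intro c v
    simpa using map_smul (UniversalEnvelopingAlgebra.ι ℂ).toLinearMap c v
  have e1t : ∀ l, (UniversalEnvelopingAlgebra.ι ℂ) ⁅(x : g), (p l : g)⁆ ⊗ₜ[ℂ] (CliffordAlgebra.ι ((B.restrict (B.orthogonal r.toSubmodule)).toQuadraticMap)) (q l)
      = ∑ m, B ⁅(x : g), (p l : g)⁆ (q m : g) • ((UniversalEnvelopingAlgebra.ι ℂ) (p m : g) ⊗ₜ[ℂ] (CliffordAlgebra.ι ((B.restrict (B.orthogonal r.toSubmodule)).toQuadraticMap)) (q l)) := by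
    intro l
    conv_lhs => rw [← hbrg1 (p l)]
    rw [hUsum, TensorProduct.sum_tmul]
    refine Finset.sum_congr rfl fun m _ => ?_
    rw [hUsmul, ← TensorProduct.smul_tmul']
  have e2t : ∀ l, (UniversalEnvelopingAlgebra.ι ℂ) (p l : g) ⊗ₜ[ℂ] (CliffordAlgebra.ι ((B.restrict (B.orthogonal r.toSubmodule)).toQuadraticMap)) (⟨⁅(x : g), (q l : g)⁆, hbr (q l)⟩ : (B.orthogonal r.toSubmodule))
      = ∑ m, B (p m : g) ⁅(x : g), (q l : g)⁆ • ((UniversalEnvelopingAlgebra.ι ℂ) (p l : g) ⊗ₜ[ℂ] (CliffordAlgebra.ι ((B.restrict (B.orthogonal r.toSubmodule)).toQuadraticMap)) (q m)) := by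
    intro l
    conv_lhs => rw [← hbrP2 (q l)]
    rw [map_sum, TensorProduct.tmul_sum]
    refine Finset.sum_congr rfl fun m _ => ?_
    rw [map_smul, TensorProduct.tmul_smul]
  have hT : (∑ l, (UniversalEnvelopingAlgebra.ι ℂ) ⁅(x : g), (p l : g)⁆ ⊗ₜ[ℂ] (CliffordAlgebra.ι ((B.restrict (B.orthogonal r.toSubmodule)).toQuadraticMap)) (q l))
      + (∑ l, (UniversalEnvelopingAlgebra.ι ℂ) (p l : g) ⊗ₜ[ℂ] (CliffordAlgebra.ι ((B.restrict (B.orthogonal r.toSubmodule)).toQuadraticMap)) (⟨⁅(x : g), (q l : g)⁆, hbr (q l)⟩ : (B.orthogonal r.toSubmodule))) = 0 := by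
    simp_rw [e1t, e2t]
    rw [show (∑ l, ∑ m, B (p m : g) ⁅(x : g), (q l : g)⁆ • ((UniversalEnvelopingAlgebra.ι ℂ) (p l : g) ⊗ₜ[ℂ] (CliffordAlgebra.ι ((B.restrict (B.orthogonal r.toSubmodule)).toQuadraticMap)) (q m)))
        = ∑ l, ∑ m, B (p l : g) ⁅(x : g), (q m : g)⁆ • ((UniversalEnvelopingAlgebra.ι ℂ) (p m : g) ⊗ₜ[ℂ] (CliffordAlgebra.ι ((B.restrict (B.orthogonal r.toSubmodule)).toQuadraticMap)) (q l))
      from Finset.sum_comm]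
    rw [← Finset.sum_add_distrib]
    refine Finset.sum_eq_zero fun l _ => ?_
    rw [← Finset.sum_add_distrib]
    refine Finset.sum_eq_zero fun m _ => ?_
    rw [← add_smul, show B ⁅(x : g), (p l : g)⁆ (q m : g)
      + B (p l : g) ⁅(x : g), (q m : g)⁆ = 0 from by rw [hB1]; ring, zero_smul]
  -- assembly
  rw [hξ x, hD]
  have generic : ∀ X A S G : UniversalEnvelopingAlgebra ℂ g ⊗[ℂ] CliffordAlgebra ((B.restrict (B.orthogonal r.toSubmodule)).toQuadraticMap),
      X * G = G * X → A * G = G * A → (X * S - S * X) + (A * S - S * A) = 0 →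
      (X + A) * (S - G) = (S - G) * (X + A) := by
    intro X A S G h1 h2 h3
    rw [← sub_eq_zero]
    have expand : (X + A) * (S - G) - (S - G) * (X + A)
        = ((X * S - S * X) + (A * S - S * A)) - ((X * G - G * X) + (A * G - G * A)) := by
      noncomm_ring
    rw [expand, h3, h1, h2]
    simp
  refine generic _ _ _ _ ?_ ?_ ?_
  · rw [Algebra.TensorProduct.tmul_mul_tmul, Algebra.TensorProduct.tmul_mul_tmul,
      one_mul, one_mul, mul_one, mul_one]
  · rw [Algebra.TensorProduct.tmul_mul_tmul, Algebra.TensorProduct.tmul_mul_tmul,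
      hcommγ]
  · rw [hXS, hAS, hT]
end

section
/- For the super-adjoint differential d = ad D^p on the superalgebra A = U(g) ⊗ Cl(p) (defined by d(x) = D^p x - (-1)^{|x|} x D^p), one has d(ξ(u)) = 0 for every u ∈ U(r), i.e., the image of ξ consists of cocycles. -/
open scoped TensorProduct
open LinearMap (BilinForm)

attribute [local instance 100] LieRing.ofAssociativeRing


private lemma dual_expand₁ {K V : Type*} {ι : Type*} [Field K] [AddCommGroup V] [Module K V]
    [Fintype ι] [DecidableEq ι] (B : LinearMap.BilinForm K V) (p : Module.Basis ι K V) (q : ι → V)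
    (hpq : ∀ i j, B (p i) (q j) = if i = j then 1 else 0) (v : V) :
    v = ∑ j, B v (q j) • p j := by
  have coord : ∀ j (v : V), p.repr v j = B v (q j) := by
    intro j v
    have h : (p.coord j : V →ₗ[K] K) = B.flip (q j) := by
      apply p.ext
      intro i
      simp [Module.Basis.coord_apply, Module.Basis.repr_self, Finsupp.single_apply, hpq i j, LinearMap.flip_apply]
    have := LinearMap.congr_fun h v
    simpa [Module.Basis.coord_apply, LinearMap.flip_apply] using this
  conv_lhs => rw [← p.sum_repr v]
  exact Finset.sum_congr rfl fun j _ => by rw [coord]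

private lemma dual_expand₂ {K V : Type*} {ι : Type*} [Field K] [AddCommGroup V] [Module K V]
    [Fintype ι] [DecidableEq ι] (B : LinearMap.BilinForm K V) (p : Module.Basis ι K V) (q : ι → V)
    (hpq : ∀ i j, B (p i) (q j) = if i = j then 1 else 0) (v : V) :
    v = ∑ j, B (p j) v • q j := by
  cases isEmpty_or_nonempty ι with
  | inl h =>
    have hv : v = ∑ i, p.repr v i • p i := (p.sum_repr v).symm
    simp only [Finset.univ_eq_empty, Finset.sum_empty] at hv ⊢
    exact hv
  | inr h =>
    -- q is linearly independent, hence a basis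
    have li : LinearIndependent K q := by
      rw [Fintype.linearIndependent_iff]
      intro c hc i
      have := congrArg (B (p i)) hc
      simpa [map_sum, map_smul, hpq, smul_eq_mul, Finset.sum_ite_eq', mul_comm] using this
    have hcard : Fintype.card ι = Module.finrank K V := by
      rw [Module.finrank_eq_card_basis p]
    let qb : Module.Basis ι K V := basisOfLinearIndependentOfCardEqFinrank li hcard
    have hqb : ∀ i, qb i = q i := fun i =>
      congrFun (coe_basisOfLinearIndependentOfCardEqFinrank li hcard) i
    have coord : ∀ j (v : V), qb.repr v j = B (p j) v := by
      intro j v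
      have h : (qb.coord j : V →ₗ[K] K) = B (p j) := by
        apply qb.ext
        intro i
        rw [Module.Basis.coord_apply, Module.Basis.repr_self, hqb i, hpq j i]
        simp [Finsupp.single_apply, eq_comm]
      have := LinearMap.congr_fun h v
      simpa [Module.Basis.coord_apply] using this
    conv_lhs => rw [← qb.sum_repr v]
    refine Finset.sum_congr rfl fun j _ => by rw [coord, hqb]

private lemma sum_cyc3 {M ι : Type*} [AddCommMonoid M] [Fintype ι] (F : ι → ι → ι → M) :
    ∑ a, ∑ b, ∑ c, F a b c = ∑ b, ∑ c, ∑ a, F a b c := by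
  rw [Finset.sum_comm]
  exact Finset.sum_congr rfl fun b _ => Finset.sum_comm

private lemma sum_swap13 {M ι : Type*} [AddCommMonoid M] [Fintype ι] (F : ι → ι → ι → M) :
    ∑ a, ∑ b, ∑ c, F a b c = ∑ c, ∑ b, ∑ a, F a b c := by
  rw [sum_cyc3]; exact Finset.sum_comm

private lemma sum_swap14 {M ι : Type*} [AddCommMonoid M] [Fintype ι] (F : ι → ι → ι → ι → M) :
    ∑ a, ∑ b, ∑ c, ∑ d, F a b c d = ∑ d, ∑ b, ∑ c, ∑ a, F a b c d := by
  rw [sum_cyc3 fun a b c => ∑ d, F a b c d]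
  rw [show (∑ b, ∑ c, ∑ a, ∑ d, F a b c d) = ∑ b, ∑ c, ∑ d, ∑ a, F a b c d from
    Finset.sum_congr rfl fun b _ => Finset.sum_congr rfl fun c _ => Finset.sum_comm]
  rw [sum_cyc3 fun b c d => ∑ a, F a b c d, sum_cyc3 fun c d b => ∑ a, F a b c d]

private lemma sum_swap24 {M ι : Type*} [AddCommMonoid M] [Fintype ι] (F : ι → ι → ι → ι → M) :
    ∑ a, ∑ b, ∑ c, ∑ d, F a b c d = ∑ a, ∑ d, ∑ c, ∑ b, F a b c d :=
  Finset.sum_congr rfl fun a _ => sum_swap13 fun b c d => F a b c d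

private lemma sum_swap34 {M ι : Type*} [AddCommMonoid M] [Fintype ι] (F : ι → ι → ι → ι → M) :
    ∑ a, ∑ b, ∑ c, ∑ d, F a b c d = ∑ a, ∑ b, ∑ d, ∑ c, F a b c d :=
  Finset.sum_congr rfl fun a _ => Finset.sum_congr rfl fun b _ => Finset.sum_comm

private lemma cubic_aux {ι : Type*} [Fintype ι] {A : Type*} [Ring A] [Algebra ℂ A]
    (e : ι → A) (a : A) (t : ι → ι → ι → ℂ) (s : ι → ι → ℂ)
    (hcomm : ∀ i, a * e i - e i * a = ∑ b, s i b • e b)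
    (hK : ∀ i j k, ((∑ l, t l j k * s l i) + (∑ m, t i m k * s m j)) + (∑ n, t i j n * s n k) = 0) :
    a * (∑ l, ∑ m, ∑ n, t l m n • (e l * e m * e n))
      = (∑ l, ∑ m, ∑ n, t l m n • (e l * e m * e n)) * a := by
  rw [← sub_eq_zero]
  have hterm : ∀ l m n : ι, a * (e l * e m * e n) - (e l * e m * e n) * a
      = ((∑ b, (s l b * 1) • (e b * e m * e n)) + ∑ b, (s m b * 1) • (e l * e b * e n))
        + ∑ b, (s n b * 1) • (e l * e m * e b) := by
    intro l m n
    have h1 := hcomm l; have h2 := hcomm m; have h3 := hcomm n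
    have expand : a * (e l * e m * e n) - (e l * e m * e n) * a
        = ((a * e l - e l * a) * e m * e n + e l * ((a * e m - e m * a) * e n))
          + e l * e m * (a * e n - e n * a) := by noncomm_ring
    rw [expand, h1, h2, h3]
    simp only [Finset.sum_mul, Finset.mul_sum, smul_mul_assoc, mul_smul_comm, mul_one, one_mul,
      mul_assoc]
  have step1 : a * (∑ l, ∑ m, ∑ n, t l m n • (e l * e m * e n))
      - (∑ l, ∑ m, ∑ n, t l m n • (e l * e m * e n)) * a
      = ∑ l, ∑ m, ∑ n, t l m n • (a * (e l * e m * e n) - (e l * e m * e n) * a) := by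
    simp only [Finset.mul_sum, Finset.sum_mul, mul_smul_comm, smul_mul_assoc,
      ← Finset.sum_sub_distrib, ← smul_sub]
  rw [step1]
  have step2 : ∀ l m n : ι, t l m n • (a * (e l * e m * e n) - (e l * e m * e n) * a)
      = ((∑ b, (t l m n * s l b) • (e b * e m * e n))
          + ∑ b, (t l m n * s m b) • (e l * e b * e n))
        + ∑ b, (t l m n * s n b) • (e l * e m * e b) := by
    intro l m n
    rw [hterm l m n]
    simp only [smul_add, Finset.smul_sum, smul_smul, mul_one]
  simp only [step2, Finset.sum_add_distrib]
  rw [sum_swap14 fun l m n b => (t l m n * s l b) • (e b * e m * e n)]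
  rw [sum_swap24 fun l m n b => (t l m n * s m b) • (e l * e b * e n)]
  rw [sum_swap34 fun l m n b => (t l m n * s n b) • (e l * e m * e b)]
  simp only [← Finset.sum_smul, ← Finset.sum_add_distrib, ← add_smul]
  refine Finset.sum_eq_zero fun i _ => Finset.sum_eq_zero fun j _ => Finset.sum_eq_zero fun k _ => ?_
  rw [Finset.sum_add_distrib, Finset.sum_add_distrib, hK i j k, zero_smul]



private lemma generator_commute
    {g : Type*} [LieRing g] [LieAlgebra ℂ g] {ι : Type*} [Fintype ι] [DecidableEq ι]
    (B : BilinForm ℂ g) (hinv : ∀ x y z : g, B ⁅x, y⁆ z = B x ⁅y, z⁆)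
    (P : Submodule ℂ g)
    (p : Module.Basis ι ℂ P) (q : ι → P)
    (hpq : ∀ i j, B (p i : g) (q j : g) = if i = j then 1 else 0)
    {U C : Type*} [Ring U] [Algebra ℂ U] [Ring C] [Algebra ℂ C]
    (uu : g →ₗ⁅ℂ⁆ U) (cc : P →ₗ[ℂ] C)
    (x : g) (hx : ∀ v : P, ⁅x, (v : g)⁆ ∈ P)
    (a : C)
    (hcomm : ∀ v : P, a * cc v - cc v * a = cc ⟨⁅x, (v : g)⁆, hx v⟩)
    (γ : C) (hγ : γ = (6⁻¹ : ℂ) • ∑ l, ∑ m, ∑ n,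
      B (q l : g) ⁅(q m : g), (q n : g)⁆ • (cc (p l) * cc (p m) * cc (p n)))
    (D : U ⊗[ℂ] C) (hD : D = (∑ l, uu (p l : g) ⊗ₜ[ℂ] cc (q l)) - 1 ⊗ₜ[ℂ] γ) :
    D * (uu x ⊗ₜ[ℂ] 1 + 1 ⊗ₜ[ℂ] a) = (uu x ⊗ₜ[ℂ] 1 + 1 ⊗ₜ[ℂ] a) * D := by
  classical
  have hres : ∀ v w : P, (B.restrict P) v w = B (v : g) (w : g) := fun _ _ => rfl
  have hpq' : ∀ i j, (B.restrict P) (p i) (q j) = if i = j then 1 else 0 := by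
    intro i j; rw [hres, hpq]
  have F1 : ∀ v : P, v = ∑ j, B (v : g) (q j : g) • p j := by
    intro v; have h := dual_expand₁ (B.restrict P) p q hpq' v
    simpa only [hres] using h
  have F2 : ∀ v : P, v = ∑ j, B (p j : g) (v : g) • q j := by
    intro v; have h := dual_expand₂ (B.restrict P) p q hpq' v
    simpa only [hres] using h
  have E2 : ∀ v : P, (v : g) = ∑ j, B (p j : g) (v : g) • (q j : g) := by
    intro v; conv_lhs => rw [F2 v]
    simp
  have E1 : ∀ v : P, (v : g) = ∑ j, B (v : g) (q j : g) • (p j : g) := by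
    intro v; conv_lhs => rw [F1 v]
    simp
  have uneg : ∀ z : g, uu (-z) = - uu z := fun z => by
    change uu.toLinearMap (-z) = - uu.toLinearMap z; exact map_neg _ z
  have usum : ∀ f : ι → g, uu (∑ j, f j) = ∑ j, uu (f j) := fun f => by
    change uu.toLinearMap _ = _; rw [map_sum]; rfl
  have usmul : ∀ (c : ℂ) (z : g), uu (c • z) = c • uu z := fun c z => by
    change uu.toLinearMap _ = _; rw [map_smul]; rfl
  have hBxv : ∀ y v w : g, B ⁅y, v⁆ w = - B v ⁅y, w⁆ := by
    intro y v w
    have h := hinv v y w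
    have h2 : ⁅y, v⁆ = -⁅v, y⁆ := (lie_skew y v).symm
    rw [h2, map_neg, LinearMap.neg_apply, h]
  have hBsum1 : ∀ (v : P) (w : g), B (v : g) w = ∑ l, B (p l : g) (v : g) * B (q l : g) w := by
    intro v w
    have := congrArg (B.flip w) (E2 v)
    simpa [map_sum, map_smul, LinearMap.flip_apply, smul_eq_mul] using this
  have hBsum2 : ∀ (v : P) (u w : g),
      B u ⁅(v : g), w⁆ = ∑ m, B (p m : g) (v : g) * B u ⁅(q m : g), w⁆ := by
    intro v u w
    let f : g →ₗ[ℂ] ℂ :=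
      { toFun := fun y => B u ⁅y, w⁆
        map_add' := fun s t => by simp [add_lie]
        map_smul' := fun s t => by simp [smul_lie] }
    have := congrArg f (E2 v)
    simpa [f, map_sum, map_smul, smul_eq_mul] using this
  have hBsum3 : ∀ (v : P) (u w : g),
      B u ⁅w, (v : g)⁆ = ∑ m, B (p m : g) (v : g) * B u ⁅w, (q m : g)⁆ := by
    intro v u w
    let f : g →ₗ[ℂ] ℂ :=
      { toFun := fun y => B u ⁅w, y⁆
        map_add' := fun s t => by simp [lie_add]
        map_smul' := fun s t => by simp [lie_smul] }
    have := congrArg f (E2 v)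
    simpa [f, map_sum, map_smul, smul_eq_mul] using this
  have C1 : ∀ v : P, cc v = ∑ j, B (v : g) (q j : g) • cc (p j) := by
    intro v; conv_lhs => rw [F1 v]
    simp [map_sum, map_smul]
  have C2 : ∀ v : P, cc v = ∑ j, B (p j : g) (v : g) • cc (q j) := by
    intro v; conv_lhs => rw [F2 v]
    simp [map_sum, map_smul]
  have U1 : ∀ v : P, uu (v : g) = ∑ j, B (v : g) (q j : g) • uu (p j : g) := by
    intro v
    conv_lhs => rw [E1 v]
    rw [usum]
    exact Finset.sum_congr rfl fun j _ => usmul _ _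
  -- the central element commutes with a
  have hcent : a * γ = γ * a := by
    rw [hγ, mul_smul_comm, smul_mul_assoc]
    congr 1
    refine cubic_aux (fun i => cc (p i)) a
      (fun l m n => B (q l : g) ⁅(q m : g), (q n : g)⁆)
      (fun i b => B ⁅x, (p i : g)⁆ (q b : g)) ?_ ?_
    · intro i
      rw [hcomm (p i), C1 ⟨⁅x, (p i : g)⁆, hx (p i)⟩]
    · intro i j k
      have c1 : (∑ l, B (q l : g) ⁅(q j : g), (q k : g)⁆ * B ⁅x, (p l : g)⁆ (q i : g))
          = - B ⁅x, (q i : g)⁆ ⁅(q j : g), (q k : g)⁆ := by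
        have e : ∀ l, B ⁅x, (p l : g)⁆ (q i : g)
            = - B (p l : g) ((⟨⁅x, (q i : g)⁆, hx (q i)⟩ : P) : g) := fun l => hBxv _ _ _
        calc (∑ l, B (q l : g) ⁅(q j : g), (q k : g)⁆ * B ⁅x, (p l : g)⁆ (q i : g))
            = - ∑ l, B (p l : g) ((⟨⁅x, (q i : g)⁆, hx (q i)⟩ : P) : g)
                * B (q l : g) ⁅(q j : g), (q k : g)⁆ := by
              rw [← Finset.sum_neg_distrib]
              exact Finset.sum_congr rfl fun l _ => by rw [e l]; ring
          _ = - B ⁅x, (q i : g)⁆ ⁅(q j : g), (q k : g)⁆ := by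
              rw [← hBsum1 ⟨⁅x, (q i : g)⁆, hx (q i)⟩ ⁅(q j : g), (q k : g)⁆]
      have c2 : (∑ m, B (q i : g) ⁅(q m : g), (q k : g)⁆ * B ⁅x, (p m : g)⁆ (q j : g))
          = - B (q i : g) ⁅⁅x, (q j : g)⁆, (q k : g)⁆ := by
        have e : ∀ m, B ⁅x, (p m : g)⁆ (q j : g)
            = - B (p m : g) ((⟨⁅x, (q j : g)⁆, hx (q j)⟩ : P) : g) := fun m => hBxv _ _ _
        calc (∑ m, B (q i : g) ⁅(q m : g), (q k : g)⁆ * B ⁅x, (p m : g)⁆ (q j : g))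
            = - ∑ m, B (p m : g) ((⟨⁅x, (q j : g)⁆, hx (q j)⟩ : P) : g)
                * B (q i : g) ⁅(q m : g), (q k : g)⁆ := by
              rw [← Finset.sum_neg_distrib]
              exact Finset.sum_congr rfl fun m _ => by rw [e m]; ring
          _ = - B (q i : g) ⁅⁅x, (q j : g)⁆, (q k : g)⁆ := by
              rw [← hBsum2 ⟨⁅x, (q j : g)⁆, hx (q j)⟩ (q i : g) (q k : g)]
      have c3 : (∑ n, B (q i : g) ⁅(q j : g), (q n : g)⁆ * B ⁅x, (p n : g)⁆ (q k : g))
          = - B (q i : g) ⁅(q j : g), ⁅x, (q k : g)⁆⁆ := by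
        have e : ∀ n, B ⁅x, (p n : g)⁆ (q k : g)
            = - B (p n : g) ((⟨⁅x, (q k : g)⁆, hx (q k)⟩ : P) : g) := fun n => hBxv _ _ _
        calc (∑ n, B (q i : g) ⁅(q j : g), (q n : g)⁆ * B ⁅x, (p n : g)⁆ (q k : g))
            = - ∑ n, B (p n : g) ((⟨⁅x, (q k : g)⁆, hx (q k)⟩ : P) : g)
                * B (q i : g) ⁅(q j : g), (q n : g)⁆ := by
              rw [← Finset.sum_neg_distrib]
              exact Finset.sum_congr rfl fun n _ => by rw [e n]; ring
          _ = - B (q i : g) ⁅(q j : g), ⁅x, (q k : g)⁆⁆ := by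
              rw [← hBsum3 ⟨⁅x, (q k : g)⁆, hx (q k)⟩ (q i : g) (q j : g)]
      rw [c1, c2, c3]
      have hleib : ⁅⁅x, (q j : g)⁆, (q k : g)⁆ + ⁅(q j : g), ⁅x, (q k : g)⁆⁆
          = ⁅x, ⁅(q j : g), (q k : g)⁆⁆ := (leibniz_lie _ _ _).symm
      have hsum := congrArg (B (q i : g)) hleib
      rw [map_add] at hsum
      have hx2 := hBxv x (q i : g) ⁅(q j : g), (q k : g)⁆
      linear_combination -hx2 - hsum
  -- per-generator commutators
  have hul : ∀ l, uu (p l : g) * uu x - uu x * uu (p l : g) = uu ⁅(p l : g), x⁆ := by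
    intro l; rw [LieHom.map_lie, Ring.lie_def]
  have hcl : ∀ l, cc (q l) * a - a * cc (q l) = - cc ⟨⁅x, (q l : g)⁆, hx (q l)⟩ := by
    intro l; rw [← hcomm (q l)]; exact (neg_sub _ _).symm
  have lex : ∀ l, uu ⁅(p l : g), x⁆
      = - ∑ m, B ⁅x, (p l : g)⁆ (q m : g) • uu (p m : g) := by
    intro l
    have h1 : ⁅(p l : g), x⁆ = -⁅x, (p l : g)⁆ := (lie_skew (p l : g) x).symm
    rw [h1, uneg, show (⁅x, (p l : g)⁆ : g)
      = ((⟨⁅x, (p l : g)⁆, hx (p l)⟩ : P) : g) from rfl, U1]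
  -- main cancellation
  have hmain : (∑ l, uu ⁅(p l : g), x⁆ ⊗ₜ[ℂ] cc (q l))
      = ∑ l, uu (p l : g) ⊗ₜ[ℂ] cc ⟨⁅x, (q l : g)⁆, hx (q l)⟩ := by
    have lhs_eq : (∑ l, uu ⁅(p l : g), x⁆ ⊗ₜ[ℂ] cc (q l))
        = ∑ l, ∑ m, (- B ⁅x, (p l : g)⁆ (q m : g)) • (uu (p m : g) ⊗ₜ[ℂ] cc (q l)) := by
      refine Finset.sum_congr rfl fun l _ => ?_
      rw [lex l]
      simp only [TensorProduct.neg_tmul, TensorProduct.sum_tmul, TensorProduct.smul_tmul',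
        ← Finset.sum_neg_distrib, ← neg_smul]
    have rhs_eq : (∑ l, uu (p l : g) ⊗ₜ[ℂ] cc ⟨⁅x, (q l : g)⁆, hx (q l)⟩)
        = ∑ m, ∑ l, (B (p m : g) ⁅x, (q l : g)⁆) • (uu (p l : g) ⊗ₜ[ℂ] cc (q m)) := by
      rw [Finset.sum_comm]
      refine Finset.sum_congr rfl fun l _ => ?_
      rw [C2 ⟨⁅x, (q l : g)⁆, hx (q l)⟩]
      simp only [TensorProduct.tmul_sum, TensorProduct.tmul_smul]
    rw [lhs_eq, rhs_eq]
    refine Finset.sum_congr rfl fun l _ => Finset.sum_congr rfl fun m _ => ?_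
    congr 1
    have := hBxv x (p l : g) (q m : g)
    rw [this, neg_neg]
  rw [← sub_eq_zero, hD]
  set S : U ⊗[ℂ] C := ∑ l, uu (p l : g) ⊗ₜ[ℂ] cc (q l) with hS
  set X1 : U ⊗[ℂ] C := uu x ⊗ₜ[ℂ] 1 with hX1
  set X2 : U ⊗[ℂ] C := 1 ⊗ₜ[ℂ] a with hX2
  set G : U ⊗[ℂ] C := 1 ⊗ₜ[ℂ] γ with hG
  have expand : (S - G) * (X1 + X2) - (X1 + X2) * (S - G)
      = ((S * X1 - X1 * S) + (S * X2 - X2 * S))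
        - ((G * X1 - X1 * G) + (G * X2 - X2 * G)) := by noncomm_ring
  have e1 : S * X1 - X1 * S = ∑ l, uu ⁅(p l : g), x⁆ ⊗ₜ[ℂ] cc (q l) := by
    rw [hS, hX1, Finset.sum_mul, Finset.mul_sum, ← Finset.sum_sub_distrib]
    refine Finset.sum_congr rfl fun l _ => ?_
    rw [Algebra.TensorProduct.tmul_mul_tmul, Algebra.TensorProduct.tmul_mul_tmul,
      mul_one, one_mul, ← TensorProduct.sub_tmul, hul l]
  have e2 : S * X2 - X2 * S = - ∑ l, uu (p l : g) ⊗ₜ[ℂ] cc ⟨⁅x, (q l : g)⁆, hx (q l)⟩ := by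
    rw [hS, hX2, Finset.sum_mul, Finset.mul_sum, ← Finset.sum_sub_distrib,
      ← Finset.sum_neg_distrib]
    refine Finset.sum_congr rfl fun l _ => ?_
    rw [Algebra.TensorProduct.tmul_mul_tmul, Algebra.TensorProduct.tmul_mul_tmul,
      mul_one, one_mul, ← TensorProduct.tmul_sub, hcl l, TensorProduct.tmul_neg]
  have eB : G * X1 - X1 * G = 0 := by
    rw [hG, hX1, Algebra.TensorProduct.tmul_mul_tmul, Algebra.TensorProduct.tmul_mul_tmul,
      mul_one, one_mul, mul_one, one_mul, sub_self]
  have eC : G * X2 - X2 * G = 0 := by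
    rw [hG, hX2, Algebra.TensorProduct.tmul_mul_tmul, Algebra.TensorProduct.tmul_mul_tmul,
      one_mul, hcent, sub_self]
  rw [expand, e1, e2, eB, eC, hmain]
  simp

variable {g : Type*} [LieRing g] [LieAlgebra ℂ g] [FiniteDimensional ℂ g]

/-- For the super-adjoint differential `d = ad D^p` on
`U(g) ⊗ Cl(p)`, every element of the image of `ξ : U(r) → U(g) ⊗ Cl(p)` is a cocycle:
`d(ξ(u)) = 0` for all `u ∈ U(r)`.  Since `ξ` takes values in the even part, the
super-commutator `d(ξ(u)) = D^p ξ(u) - (-1)^{|ξ(u)|} ξ(u) D^p` is the ordinary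
commutator `D^p ξ(u) - ξ(u) D^p`. -/
theorem xi_image_consists_of_cocycles
    (B : BilinForm ℂ g)
    (hsymm : ∀ x y : g, B x y = B y x)
    (hinv : ∀ x y z : g, B ⁅x, y⁆ z = B x ⁅y, z⁆)
    (hnondeg : B.Nondegenerate)
    (r : LieSubalgebra ℂ g)
    (hr : (B.restrict r.toSubmodule).Nondegenerate)
    (hstab : ∀ x ∈ r, ∀ y ∈ B.orthogonal r.toSubmodule,
      ⁅x, y⁆ ∈ B.orthogonal r.toSubmodule)
    (α : r →ₗ⁅ℂ⁆
        CliffordAlgebra (B.restrict (B.orthogonal r.toSubmodule)).toQuadraticMap)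
    (hα : ∀ (x : r) (y : B.orthogonal r.toSubmodule),
      ⁅α x, CliffordAlgebra.ι (B.restrict (B.orthogonal r.toSubmodule)).toQuadraticMap y⁆ =
        CliffordAlgebra.ι (B.restrict (B.orthogonal r.toSubmodule)).toQuadraticMap
          ⟨⁅(x : g), (y : g)⁆, hstab x x.2 y y.2⟩)
    (ξ : UniversalEnvelopingAlgebra ℂ r →ₐ[ℂ]
        UniversalEnvelopingAlgebra ℂ g ⊗[ℂ]
          CliffordAlgebra (B.restrict (B.orthogonal r.toSubmodule)).toQuadraticMap)
    (hξ : ∀ x : r, ξ (UniversalEnvelopingAlgebra.ι ℂ x)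
      = (UniversalEnvelopingAlgebra.ι ℂ (x : g)) ⊗ₜ[ℂ] 1 + 1 ⊗ₜ[ℂ] α x)
    {ι : Type*} [Fintype ι] [DecidableEq ι]
    (p : Module.Basis ι ℂ (B.orthogonal r.toSubmodule)) (q : ι → (B.orthogonal r.toSubmodule))
    (hpq : ∀ i j, B (p i : g) (q j : g) = if i = j then 1 else 0)
    (γp : CliffordAlgebra (B.restrict (B.orthogonal r.toSubmodule)).toQuadraticMap)
    (hγ : γp = (6⁻¹ : ℂ) • ∑ l, ∑ m, ∑ n,
      B (q l : g) ⁅(q m : g), (q n : g)⁆ •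
        (CliffordAlgebra.ι (B.restrict (B.orthogonal r.toSubmodule)).toQuadraticMap (p l) *
         CliffordAlgebra.ι (B.restrict (B.orthogonal r.toSubmodule)).toQuadraticMap (p m) *
         CliffordAlgebra.ι (B.restrict (B.orthogonal r.toSubmodule)).toQuadraticMap (p n)))
    (Dp : UniversalEnvelopingAlgebra ℂ g ⊗[ℂ]
        CliffordAlgebra (B.restrict (B.orthogonal r.toSubmodule)).toQuadraticMap)
    (hD : Dp = (∑ l, (UniversalEnvelopingAlgebra.ι ℂ (p l : g)) ⊗ₜ[ℂ]
        CliffordAlgebra.ι (B.restrict (B.orthogonal r.toSubmodule)).toQuadraticMap (q l))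
      - 1 ⊗ₜ[ℂ] γp) :
    ∀ u : UniversalEnvelopingAlgebra ℂ r, Dp * ξ u - ξ u * Dp = 0 := by
  have key : ∀ y : r, Dp * ξ (UniversalEnvelopingAlgebra.ι ℂ y)
      = ξ (UniversalEnvelopingAlgebra.ι ℂ y) * Dp := by
    intro y
    rw [hξ y]
    exact generator_commute B hinv (B.orthogonal r.toSubmodule) p q hpq
      (UniversalEnvelopingAlgebra.ι ℂ)
      (CliffordAlgebra.ι (B.restrict (B.orthogonal r.toSubmodule)).toQuadraticMap)
      (y : g) (fun v => hstab y y.2 v v.2) (α y)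
      (fun v => by have h := hα y v; rw [Ring.lie_def] at h; exact h)
      γp hγ Dp hD
  suffices h : ∀ u : UniversalEnvelopingAlgebra ℂ r, Dp * ξ u = ξ u * Dp by
    intro u; rw [h u, sub_self]
  intro u
  obtain ⟨t, rfl⟩ : ∃ t, UniversalEnvelopingAlgebra.mkAlgHom ℂ r t = u := ⟨Quotient.out u, Quotient.out_eq u⟩
  induction t using TensorAlgebra.induction with
  | algebraMap c =>
    have h1 : (UniversalEnvelopingAlgebra.mkAlgHom ℂ r)
          ((algebraMap ℂ (TensorAlgebra ℂ r)) c)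
        = algebraMap ℂ (UniversalEnvelopingAlgebra ℂ r) c := AlgHom.commutes _ c
    rw [h1, AlgHom.commutes]
    exact (Algebra.commutes c Dp).symm
  | ι y =>
    have h : (UniversalEnvelopingAlgebra.mkAlgHom ℂ r) (TensorAlgebra.ι ℂ y)
        = UniversalEnvelopingAlgebra.ι ℂ y := rfl
    rw [h]
    exact key y
  | mul a b ha hb =>
    rw [map_mul, map_mul, ← mul_assoc, ha, mul_assoc, hb, ← mul_assoc]
  | add a b ha hb =>
    rw [map_add, map_add, mul_add, add_mul, ha, hb]
end

section
/- Suppose z ∈ Z(g), η(z) ∈ Z(r), and z ⊗ 1 - ξ(η(z)) = D^p a + a D^p for some a ∈ U(g) ⊗ Cl(p). Let V be a U(g)-module with central character χ (z·v = χ(z)v for all v ∈ V, z ∈ Z(g)) and S a Cl(p)-module. Then for every v₀ ∈ Ker D^p_V ⊆ V ⊗ S, the element χ(z)·v₀ - η(z)·v₀ lies in Im D^p_V ∩ Ker D^p_V; hence in the Dirac cohomology H_D(g,r;V), the action of z (via χ) agrees with the action of η(z) via ξ. -/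
open scoped TensorProduct
open LinearMap (BilinForm)

attribute [local instance 100] LieRing.ofAssociativeRing

variable {g : Type*} [LieRing g] [LieAlgebra ℂ g] [FiniteDimensional ℂ g]

/-- Suppose `z ∈ Z(g)`, `η(z) ∈ Z(r)`, and
`z ⊗ 1 - ξ(η(z)) = D^p a + a D^p` for some `a ∈ U(g) ⊗ Cl(p)`.  Let `V` be a
`U(g)`-module with central character `χ` and `S` a `Cl(p)`-module.  Then for every
`v₀ ∈ Ker D^p_V ⊆ V ⊗ S`, the element `χ(z)·v₀ - η(z)·v₀` lies in
`Im D^p_V ∩ Ker D^p_V`; hence in the Dirac cohomology the action of `z` (via `χ`)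
agrees with the action of `η(z)` via `ξ`. -/
theorem dirac_cohomology_central_character
    (B : BilinForm ℂ g)
    (hsymm : ∀ x y : g, B x y = B y x)
    (hinv : ∀ x y z : g, B ⁅x, y⁆ z = B x ⁅y, z⁆)
    (hnondeg : B.Nondegenerate)
    (r : LieSubalgebra ℂ g)
    (hr : (B.restrict r.toSubmodule).Nondegenerate)
    (hstab : ∀ x ∈ r, ∀ y ∈ B.orthogonal r.toSubmodule,
      ⁅x, y⁆ ∈ B.orthogonal r.toSubmodule)
    (α : r →ₗ⁅ℂ⁆
        CliffordAlgebra (B.restrict (B.orthogonal r.toSubmodule)).toQuadraticMap)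
    (hα : ∀ (x : r) (y : B.orthogonal r.toSubmodule),
      ⁅α x, CliffordAlgebra.ι (B.restrict (B.orthogonal r.toSubmodule)).toQuadraticMap y⁆ =
        CliffordAlgebra.ι (B.restrict (B.orthogonal r.toSubmodule)).toQuadraticMap
          ⟨⁅(x : g), (y : g)⁆, hstab x x.2 y y.2⟩)
    (ξ : UniversalEnvelopingAlgebra ℂ r →ₐ[ℂ]
        UniversalEnvelopingAlgebra ℂ g ⊗[ℂ]
          CliffordAlgebra (B.restrict (B.orthogonal r.toSubmodule)).toQuadraticMap)
    (hξ : ∀ x : r, ξ (UniversalEnvelopingAlgebra.ι ℂ x)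
      = (UniversalEnvelopingAlgebra.ι ℂ (x : g)) ⊗ₜ[ℂ] 1 + 1 ⊗ₜ[ℂ] α x)
    -- the cubic Dirac operator
    (Dp : UniversalEnvelopingAlgebra ℂ g ⊗[ℂ]
        CliffordAlgebra (B.restrict (B.orthogonal r.toSubmodule)).toQuadraticMap)
    {ι : Type*} [Fintype ι] [DecidableEq ι]
    (p : Module.Basis ι ℂ (B.orthogonal r.toSubmodule)) (q : ι → (B.orthogonal r.toSubmodule))
    (hpq : ∀ i j, B (p i : g) (q j : g) = if i = j then 1 else 0)
    (γp : CliffordAlgebra (B.restrict (B.orthogonal r.toSubmodule)).toQuadraticMap)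
    (hγ : γp = (6⁻¹ : ℂ) • ∑ l, ∑ m, ∑ n,
      B (q l : g) ⁅(q m : g), (q n : g)⁆ •
        (CliffordAlgebra.ι (B.restrict (B.orthogonal r.toSubmodule)).toQuadraticMap (p l) *
         CliffordAlgebra.ι (B.restrict (B.orthogonal r.toSubmodule)).toQuadraticMap (p m) *
         CliffordAlgebra.ι (B.restrict (B.orthogonal r.toSubmodule)).toQuadraticMap (p n)))
    (hD : Dp = (∑ l, (UniversalEnvelopingAlgebra.ι ℂ (p l : g)) ⊗ₜ[ℂ]
        CliffordAlgebra.ι (B.restrict (B.orthogonal r.toSubmodule)).toQuadraticMap (q l))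
      - 1 ⊗ₜ[ℂ] γp)
    -- central elements and the homotopy relation
    (z : Subalgebra.center ℂ (UniversalEnvelopingAlgebra ℂ g))
    (ηz : UniversalEnvelopingAlgebra ℂ r)
    (hηz : ηz ∈ Subalgebra.center ℂ (UniversalEnvelopingAlgebra ℂ r))
    (a : UniversalEnvelopingAlgebra ℂ g ⊗[ℂ]
        CliffordAlgebra (B.restrict (B.orthogonal r.toSubmodule)).toQuadraticMap)
    (hhomotopy : (z : UniversalEnvelopingAlgebra ℂ g) ⊗ₜ[ℂ] 1 - ξ ηz = Dp * a + a * Dp)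
    (hcomm : Dp * ξ ηz = ξ ηz * Dp)
    -- the modules V and S
    (V : Type*) [AddCommGroup V] [Module ℂ V]
    [Module (UniversalEnvelopingAlgebra ℂ g) V]
    [IsScalarTower ℂ (UniversalEnvelopingAlgebra ℂ g) V]
    [SMulCommClass (UniversalEnvelopingAlgebra ℂ g) ℂ V]
    (S : Type*) [AddCommGroup S] [Module ℂ S]
    [Module (CliffordAlgebra (B.restrict (B.orthogonal r.toSubmodule)).toQuadraticMap) S]
    [IsScalarTower ℂ
      (CliffordAlgebra (B.restrict (B.orthogonal r.toSubmodule)).toQuadraticMap) S]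
    [SMulCommClass
      (CliffordAlgebra (B.restrict (B.orthogonal r.toSubmodule)).toQuadraticMap) ℂ S]
    -- the central character of V
    (χ : Subalgebra.center ℂ (UniversalEnvelopingAlgebra ℂ g) → ℂ)
    (hχ : ∀ (z' : Subalgebra.center ℂ (UniversalEnvelopingAlgebra ℂ g)) (v : V),
      (z' : UniversalEnvelopingAlgebra ℂ g) • v = χ z' • v)
    -- the action of `U(g) ⊗ Cl(p)` on `V ⊗ S` (componentwise on pure tensors)
    (actA : (UniversalEnvelopingAlgebra ℂ g ⊗[ℂ]
        CliffordAlgebra (B.restrict (B.orthogonal r.toSubmodule)).toQuadraticMap)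
      →ₗ[ℂ] (V ⊗[ℂ] S →ₗ[ℂ] V ⊗[ℂ] S))
    (hactA : ∀ (u : UniversalEnvelopingAlgebra ℂ g)
        (c : CliffordAlgebra (B.restrict (B.orthogonal r.toSubmodule)).toQuadraticMap),
      actA (u ⊗ₜ[ℂ] c) = TensorProduct.map (DistribMulAction.toLinearMap ℂ V u)
        (DistribMulAction.toLinearMap ℂ S c)) :
    ∀ w₀ : V ⊗[ℂ] S, actA Dp w₀ = 0 →
      χ z • w₀ - actA (ξ ηz) w₀ ∈ LinearMap.range (actA Dp) ∧
      χ z • w₀ - actA (ξ ηz) w₀ ∈ LinearMap.ker (actA Dp) := by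
  have hmul : ∀ x y : UniversalEnvelopingAlgebra ℂ g ⊗[ℂ]
      CliffordAlgebra (B.restrict (B.orthogonal r.toSubmodule)).toQuadraticMap,
      actA (x * y) = (actA x) ∘ₗ (actA y) := by
    intro x y
    induction x using TensorProduct.induction_on with
    | zero => simp
    | add x1 x2 h1 h2 =>
      rw [add_mul, map_add, map_add, h1, h2, LinearMap.add_comp]
    | tmul u c =>
      induction y using TensorProduct.induction_on with
      | zero => simp
      | add y1 y2 h1 h2 =>
        rw [mul_add, map_add, map_add, h1, h2, LinearMap.comp_add]
      | tmul u' c' =>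
        rw [Algebra.TensorProduct.tmul_mul_tmul, hactA, hactA, hactA]
        ext v s
        simp [mul_smul, DistribMulAction.toLinearMap]
  have hz1 : ∀ w : V ⊗[ℂ] S,
      actA ((z : UniversalEnvelopingAlgebra ℂ g) ⊗ₜ[ℂ] 1) w = χ z • w := by
    intro w
    induction w using TensorProduct.induction_on with
    | zero => simp
    | add w1 w2 h1 h2 => rw [map_add, h1, h2, smul_add]
    | tmul v s =>
      rw [hactA]
      simp only [TensorProduct.map_tmul, DistribMulAction.toLinearMap, DistribSMul.toLinearMap_apply, hχ z v,
        one_smul]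
      rw [TensorProduct.smul_tmul']
  intro w₀ hw₀
  have key : χ z • w₀ - actA (ξ ηz) w₀ = actA Dp (actA a w₀) := by
    have h1 : χ z • w₀ - actA (ξ ηz) w₀
        = actA ((z : UniversalEnvelopingAlgebra ℂ g) ⊗ₜ[ℂ] 1 - ξ ηz) w₀ := by
      rw [map_sub, LinearMap.sub_apply, hz1]
    rw [h1, hhomotopy, map_add, LinearMap.add_apply, hmul, hmul,
      LinearMap.comp_apply, LinearMap.comp_apply, hw₀, map_zero, add_zero]
  refine ⟨⟨actA a w₀, key.symm⟩, ?_⟩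
  rw [LinearMap.mem_ker, map_sub, map_smul, hw₀, smul_zero, zero_sub,
    ← LinearMap.comp_apply, ← hmul, hcomm, hmul, LinearMap.comp_apply, hw₀,
    map_zero, neg_zero]
end
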